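/- Let A be a commutative ring, S ⊆ A a multiplicative subset consisting of nonzerodivisors of A, and ρ : A → B a homomorphism of commutative rings such that ρ(s) is a nonzerodivisor of B for every s ∈ S and such that the induced homomorphism A/sA → B/ρ(s)B is an isomorphism for every s ∈ S (a Karoubi square). Then the square is a pull-back: for every pair (x, y) with x ∈ S^{-1}A, y ∈ B having equal images in ρ(S)^{-1}B, there exists a unique a ∈ A mapping to x in S^{-1}A and to y in B. -/

import Mathlib

theorem span_le_comap_span {A B : Type*} [CommRing A] [CommRing B] (ρ : A →+* B) (s : A) :
    Ideal.span {s} ≤ Ideal.comap ρ (Ideal.span {ρ s}) := by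
  rw [Ideal.span_le]
  intro x hx
  simp only [Set.mem_singleton_iff] at hx
  subst hx
  exact Ideal.mem_comap.mpr (Ideal.subset_span rfl)

/-- A Karoubi square is a pull-back square. -/
theorem karoubi_square_is_pullback
    {A B : Type*} [CommRing A] [CommRing B] (S : Submonoid A) (ρ : A →+* B)
    (hS : S ≤ nonZeroDivisors A)
    (hρS : ∀ s ∈ S, ρ s ∈ nonZeroDivisors B)
    (hiso : ∀ s ∈ S, Function.Bijective
      (Ideal.quotientMap (Ideal.span {ρ s}) ρ (span_le_comap_span ρ s))) :
    ∀ (x : Localization S) (y : B),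
      IsLocalization.map (Localization (S.map ρ)) ρ (Submonoid.le_comap_map S) x
        = algebraMap B (Localization (S.map ρ)) y →
      ∃! a : A, algebraMap A (Localization S) a = x ∧ ρ a = y := by
  intro x y hxy
  obtain ⟨⟨a, s⟩, rfl⟩ := IsLocalization.mk'_surjective S x
  rw [IsLocalization.map_mk'] at hxy
  -- image submonoid consists of nonzerodivisors
  have hmap : S.map ρ ≤ nonZeroDivisors B := by
    rintro b ⟨t, ht, rfl⟩
    exact hρS t ht
  have hinjB : Function.Injective (algebraMap B (Localization (S.map ρ))) :=
    IsLocalization.injective _ hmap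
  have hinjA : Function.Injective (algebraMap A (Localization S)) :=
    IsLocalization.injective _ hS
  -- ρ a = y * ρ s in B
  have h1 : ρ a = y * ρ s := by
    apply hinjB
    rw [map_mul]
    rw [IsLocalization.mk'_eq_iff_eq_mul] at hxy
    exact hxy
  -- a ∈ span {s}
  have h2 : (a : A) ∈ Ideal.span {(s : A)} := by
    have hq := (hiso s s.2).1
    have : Ideal.quotientMap (Ideal.span {ρ s}) ρ (span_le_comap_span ρ (s : A))
        (Ideal.Quotient.mk _ a) = 0 := by
      rw [Ideal.quotientMap_mk, Ideal.Quotient.eq_zero_iff_mem, h1,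
        Ideal.mem_span_singleton]
      exact ⟨y, mul_comm y (ρ s)⟩
    have h0 : Ideal.quotientMap (Ideal.span {ρ s}) ρ (span_le_comap_span ρ (s : A)) 0 = 0 :=
      map_zero _
    have := hq (this.trans h0.symm)
    rwa [Ideal.Quotient.eq_zero_iff_mem] at this
  obtain ⟨a', ha'⟩ := Ideal.mem_span_singleton.mp h2
  -- ρ a' = y
  have h3 : ρ a' = y := by
    have hne := hρS s s.2
    have : (ρ a' - y) * ρ s = 0 := by
      rw [sub_mul]
      have : ρ a' * ρ s = y * ρ s := by
        rw [← map_mul, mul_comm a' (s : A), ← ha', h1]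
      rw [this, sub_self]
    exact sub_eq_zero.mp (hne.2 _ this)
  -- algebraMap a' = mk' a s
  have h4 : algebraMap A (Localization S) a' = IsLocalization.mk' (Localization S) a s := by
    rw [eq_comm, IsLocalization.mk'_eq_iff_eq_mul, ← map_mul, mul_comm]
    exact congrArg _ ha'
  refine ⟨a', ⟨h4, h3⟩, ?_⟩
  rintro b ⟨hb1, _⟩
  exact hinjA (hb1.trans h4.symm)
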